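/- arXiv:2109.13824 — 3 statements merged into one kernel-verified Lean document; each statement's English description precedes it below -/
import Mathlib

section
/- For ρ ≥ 0 and t > 0, the volume of the set {(α₁,α₂,β₁,…,β_ρ) ∈ ℝ^(ρ+2) : α₁² + α₂² ≤ 1/t² and β₁² + ⋯ + β_ρ² ≤ t(α₁² + α₂²)} equals 2π^((ρ+2)/2) / ((ρ+2)·Γ(ρ/2 + 1)·t^((ρ+4)/2)). -/
open MeasureTheory Real

private theorem slice_vol (ρ : ℕ) {R : ℝ} (hR : 0 ≤ R) :
    volume {β : Fin ρ → ℝ | ∑ j, β j ^ 2 ≤ R} =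
      ENNReal.ofReal (Real.sqrt R ^ ρ * (Real.sqrt π ^ ρ / Real.Gamma (ρ / 2 + 1))) := by
  rcases Nat.eq_zero_or_pos ρ with hρ | hρ
  · subst hρ
    simp only [Finset.univ_eq_empty, Finset.sum_empty, pow_zero, one_mul, hR,
      Set.setOf_true, Nat.cast_zero, zero_div, zero_add, Real.Gamma_one, div_one,
      ENNReal.ofReal_one]
    rw [MeasureTheory.volume_pi, MeasureTheory.Measure.pi_univ]
    simp
  · have : Nonempty (Fin ρ) := Fin.pos_iff_nonempty.mp hρ
    have hmeas : MeasurableSet {β : Fin ρ → ℝ | ∑ j, β j ^ 2 ≤ R} :=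
      measurableSet_le (by fun_prop) measurable_const
    rw [← (EuclideanSpace.volume_preserving_symm_measurableEquiv_toLp (Fin ρ)).measure_preimage
      hmeas.nullMeasurableSet]
    have hset : (MeasurableEquiv.toLp 2 (Fin ρ → ℝ)).symm ⁻¹' {β : Fin ρ → ℝ | ∑ j, β j ^ 2 ≤ R}
        = Metric.closedBall 0 (Real.sqrt R) := by
      ext x
      simp only [Set.mem_preimage, Set.mem_setOf_eq, Metric.mem_closedBall, dist_zero_right,
        EuclideanSpace.norm_eq, Real.norm_eq_abs, sq_abs]
      rw [show ∑ j, ((MeasurableEquiv.toLp 2 (Fin ρ → ℝ)).symm x) j ^ 2 = ∑ j, x j ^ 2 from rfl]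
      constructor
      · exact fun h => Real.sqrt_le_sqrt h
      · intro h
        calc ∑ j, x j ^ 2 = Real.sqrt (∑ j, x j ^ 2) ^ 2 := by
              rw [Real.sq_sqrt (by positivity)]
          _ ≤ Real.sqrt R ^ 2 := by
              have h0 : (0:ℝ) ≤ Real.sqrt (∑ j, x j ^ 2) := Real.sqrt_nonneg _
              exact pow_le_pow_left₀ h0 h 2
          _ = R := Real.sq_sqrt hR
    rw [hset, EuclideanSpace.volume_closedBall]
    simp only [Fintype.card_fin]
    rw [← ENNReal.ofReal_pow (Real.sqrt_nonneg _), ← ENNReal.ofReal_mul (by positivity)]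

private theorem lintegral_norm_complex (G : ℝ → ENNReal) (hG : Measurable G) :
    ∫⁻ z : ℂ, G ‖z‖ = (2 * NNReal.pi) * ∫⁻ r in Set.Ioi (0 : ℝ), ENNReal.ofReal r * G r := by
  have hc : MeasurableSet ({0}ᶜ : Set ℂ) := (measurableSet_singleton (0:ℂ)).compl
  calc ∫⁻ z : ℂ, G ‖z‖ = ∫⁻ z in ({0}ᶜ : Set ℂ), G ‖z‖ := by
        rw [MeasureTheory.restrict_compl_singleton]
    _ = ∫⁻ x : ({0}ᶜ : Set ℂ), G ‖(x : ℂ)‖ ∂((volume : Measure ℂ).comap Subtype.val) :=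
        (lintegral_subtype_comap hc fun z => G ‖z‖).symm
    _ = ∫⁻ p : (Metric.sphere (0:ℂ) 1 × Set.Ioi (0:ℝ)),
          G p.2 ∂((volume : Measure ℂ).toSphere.prod
            (Measure.volumeIoiPow (Module.finrank ℝ ℂ - 1))) := by
        rw [← (Measure.measurePreserving_homeomorphUnitSphereProd
          (volume : Measure ℂ)).lintegral_comp (f := fun p => G p.2) (by fun_prop)]
        exact lintegral_congr fun x => by rw [homeomorphUnitSphereProd_apply_snd_coe]
    _ = (volume : Measure ℂ).toSphere Set.univ *
          ∫⁻ r : Set.Ioi (0:ℝ), G r ∂(Measure.volumeIoiPow (Module.finrank ℝ ℂ - 1)) := by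
        rw [MeasureTheory.lintegral_prod _ (by fun_prop)]
        simp [lintegral_const, mul_comm]
    _ = (2 * NNReal.pi) * ∫⁻ r in Set.Ioi (0 : ℝ), ENNReal.ofReal r * G r := by
        rw [Measure.toSphere_apply_univ, Complex.volume_ball, Complex.finrank_real_complex]
        simp only [ENNReal.ofReal_one, one_pow, one_mul]
        congr 1
        rw [Measure.volumeIoiPow, lintegral_withDensity_eq_lintegral_mul _ (by fun_prop)
          (by fun_prop)]
        rw [show ((2:ℕ) - 1 : ℕ) = 1 from rfl]
        simp only [Pi.mul_apply]
        rw [lintegral_subtype_comap measurableSet_Ioi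
          (fun r : ℝ => ENNReal.ofReal (r ^ 1) * G r)]
        simp [pow_one]

/-- For `ρ ≥ 0` and `t > 0`, the volume of
`{(α₁,α₂,β) : α₁² + α₂² ≤ 1/t², Σ βⱼ² ≤ t(α₁² + α₂²)}` in `ℝ^(ρ+2)` equals
`2π^((ρ+2)/2) / ((ρ+2)·Γ(ρ/2+1)·t^((ρ+4)/2))`. -/
theorem volume_phase_one_region (ρ : ℕ) (t : ℝ) (ht : 0 < t) :
    volume {p : ℝ × ℝ × (Fin ρ → ℝ) |
        p.1 ^ 2 + p.2.1 ^ 2 ≤ 1 / t ^ 2 ∧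
        (∑ j, (p.2.2 j) ^ 2) ≤ t * (p.1 ^ 2 + p.2.1 ^ 2)}
      = ENNReal.ofReal
          (2 * π ^ (((ρ : ℝ) + 2) / 2) /
            (((ρ : ℝ) + 2) * Real.Gamma ((ρ : ℝ) / 2 + 1) * t ^ (((ρ : ℝ) + 4) / 2))) := by
  have hΓ : 0 < Real.Gamma ((ρ : ℝ) / 2 + 1) := Real.Gamma_pos_of_pos (by positivity)
  have hπ := Real.pi_pos
  set s : Set (ℝ × ℝ × (Fin ρ → ℝ)) := {p : ℝ × ℝ × (Fin ρ → ℝ) |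
        p.1 ^ 2 + p.2.1 ^ 2 ≤ 1 / t ^ 2 ∧
        (∑ j, (p.2.2 j) ^ 2) ≤ t * (p.1 ^ 2 + p.2.1 ^ 2)} with hs
  have hsm : MeasurableSet s := by
    rw [hs, Set.setOf_and]
    exact (measurableSet_le (by fun_prop) (by fun_prop)).inter
      (measurableSet_le (by fun_prop) (by fun_prop))
  set e : ℂ × (Fin ρ → ℝ) ≃ᵐ ℝ × ℝ × (Fin ρ → ℝ) :=
    (Complex.measurableEquivRealProd.prodCongr (MeasurableEquiv.refl _)).trans
      MeasurableEquiv.prodAssoc with he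
  have hep : MeasurePreserving e :=
    (Complex.volume_preserving_equiv_real_prod.prod (MeasurePreserving.id _)).trans
      (volume_preserving_prodAssoc)
  set G : ℝ → ENNReal := Set.indicator (Set.Iic (1/t)) (fun r => ENNReal.ofReal
      ((Real.sqrt t * r) ^ ρ * (Real.sqrt π ^ ρ / Real.Gamma (ρ / 2 + 1)))) with hGdef
  have hGmeas : Measurable G := Measurable.indicator (by fun_prop) measurableSet_Iic
  have hslice : ∀ z : ℂ, volume (Prod.mk z ⁻¹' (e ⁻¹' s)) = G ‖z‖ := by
    intro z
    have h2 : e ⁻¹' s = {q : ℂ × (Fin ρ → ℝ) |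
        q.1.re ^ 2 + q.1.im ^ 2 ≤ 1 / t ^ 2 ∧
        (∑ j, (q.2 j) ^ 2) ≤ t * (q.1.re ^ 2 + q.1.im ^ 2)} := rfl
    rw [h2]
    have hnorm : z.re ^ 2 + z.im ^ 2 = ‖z‖ ^ 2 := by
      rw [Complex.sq_norm, Complex.normSq_apply]; ring
    have hiff : ‖z‖ ^ 2 ≤ 1 / t ^ 2 ↔ ‖z‖ ≤ 1 / t := by
      rw [show (1:ℝ) / t ^ 2 = (1/t) ^ 2 by ring]
      exact pow_le_pow_iff_left₀ (norm_nonneg z) (by positivity) two_ne_zero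
    by_cases hz : ‖z‖ ≤ 1 / t
    · have hpre : Prod.mk z ⁻¹' {q : ℂ × (Fin ρ → ℝ) |
          q.1.re ^ 2 + q.1.im ^ 2 ≤ 1 / t ^ 2 ∧
          (∑ j, (q.2 j) ^ 2) ≤ t * (q.1.re ^ 2 + q.1.im ^ 2)}
          = {β : Fin ρ → ℝ | ∑ j, β j ^ 2 ≤ t * ‖z‖ ^ 2} := by
        ext β
        simp only [Set.mem_preimage, Set.mem_setOf_eq, hnorm, hiff.2 hz, true_and]
      rw [hpre, slice_vol ρ (by positivity), hGdef,
        Set.indicator_of_mem (Set.mem_Iic.mpr hz)]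
      congr 2
      rw [Real.sqrt_mul ht.le, Real.sqrt_sq (norm_nonneg z)]
    · have hpre : Prod.mk z ⁻¹' {q : ℂ × (Fin ρ → ℝ) |
          q.1.re ^ 2 + q.1.im ^ 2 ≤ 1 / t ^ 2 ∧
          (∑ j, (q.2 j) ^ 2) ≤ t * (q.1.re ^ 2 + q.1.im ^ 2)} = ∅ := by
        ext β
        simp only [Set.mem_preimage, Set.mem_setOf_eq, Set.mem_empty_iff_false, iff_false,
          not_and, hnorm]
        intro h
        exact absurd (hiff.1 h) hz
      rw [hpre, measure_empty, hGdef, Set.indicator_of_notMem (by simpa using hz)]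
  have key : volume s = (2 * NNReal.pi : ENNReal) *
      ∫⁻ r in Set.Ioi (0 : ℝ), ENNReal.ofReal r * G r := by
    rw [← hep.measure_preimage hsm.nullMeasurableSet]
    rw [MeasureTheory.Measure.volume_eq_prod, Measure.prod_apply (hsm.preimage e.measurable)]
    rw [lintegral_congr hslice, lintegral_norm_complex G hGmeas]
  rw [key]
  have hA : (0:ℝ) < 1/t := by positivity
  have hI : ∫⁻ r in Set.Ioi (0:ℝ), ENNReal.ofReal r * G r
      = ENNReal.ofReal ((Real.sqrt t ^ ρ * (Real.sqrt π ^ ρ / Real.Gamma (ρ / 2 + 1)))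
          * ((1/t) ^ (ρ + 2) / (ρ + 2))) := by
    set C : ℝ := Real.sqrt π ^ ρ / Real.Gamma (ρ / 2 + 1) with hC
    have hC0 : 0 ≤ C := by positivity
    have h1 : ∀ r : ℝ, ENNReal.ofReal r * G r
        = Set.indicator (Set.Iic (1/t))
          (fun r => ENNReal.ofReal r * ENNReal.ofReal ((Real.sqrt t * r) ^ ρ * C)) r := by
      intro r
      rw [hGdef]
      by_cases hr : r ∈ Set.Iic (1/t)
      · rw [Set.indicator_of_mem hr, Set.indicator_of_mem hr]
      · rw [Set.indicator_of_notMem hr, Set.indicator_of_notMem hr, mul_zero]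
    simp_rw [h1]
    rw [lintegral_indicator measurableSet_Iic _,
      Measure.restrict_restrict measurableSet_Iic,
      show Set.Iic (1/t) ∩ Set.Ioi (0:ℝ) = Set.Ioc 0 (1/t) by
        rw [Set.inter_comm, Set.Ioi_inter_Iic]]
    have h2 : ∀ r ∈ Set.Ioc (0:ℝ) (1/t),
        ENNReal.ofReal r * ENNReal.ofReal ((Real.sqrt t * r) ^ ρ * C)
        = ENNReal.ofReal ((Real.sqrt t ^ ρ * C) * r ^ (ρ + 1)) := by
      intro r hr
      rw [← ENNReal.ofReal_mul hr.1.le]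
      congr 1
      rw [mul_pow]; ring
    rw [setLIntegral_congr_fun measurableSet_Ioc h2]
    rw [← MeasureTheory.ofReal_integral_eq_lintegral_ofReal
      ((intervalIntegral.intervalIntegrable_pow (ρ+1)).1.const_mul _)
      ((ae_restrict_mem measurableSet_Ioc).mono fun r hr => by
        have := hr.1.le; positivity)]
    congr 1
    rw [← intervalIntegral.integral_of_le hA.le, intervalIntegral.integral_const_mul,
      integral_pow]
    rw [zero_pow (by omega)]
    push_cast
    ring
  rw [hI]
  rw [show (2 * NNReal.pi : ENNReal) = ENNReal.ofReal (2 * π) by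
    rw [ENNReal.ofReal_mul (by norm_num), ENNReal.ofReal_ofNat, ← NNReal.coe_real_pi,
      ENNReal.ofReal_coe_nnreal]]
  rw [← ENNReal.ofReal_mul (by positivity)]
  congr 1
  have hst : Real.sqrt t ^ ρ = t ^ ((ρ : ℝ) / 2) := by
    rw [Real.sqrt_eq_rpow, ← Real.rpow_natCast (t ^ ((1:ℝ)/2)) ρ, ← Real.rpow_mul ht.le]
    ring_nf
  have hsπ : Real.sqrt π ^ ρ = π ^ ((ρ : ℝ) / 2) := by
    rw [Real.sqrt_eq_rpow, ← Real.rpow_natCast (π ^ ((1:ℝ)/2)) ρ, ← Real.rpow_mul hπ.le]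
    ring_nf
  have hπ2 : π ^ (((ρ : ℝ) + 2) / 2) = π ^ ((ρ : ℝ) / 2) * π := by
    rw [show ((ρ : ℝ) + 2) / 2 = (ρ : ℝ) / 2 + 1 by ring, Real.rpow_add hπ, Real.rpow_one]
  have ht2 : t ^ (((ρ : ℝ) + 4) / 2) = t ^ ((ρ : ℝ) / 2) * t ^ 2 := by
    rw [show ((ρ : ℝ) + 4) / 2 = (ρ : ℝ) / 2 + 2 by ring, Real.rpow_add ht,
      Real.rpow_two]
  have hX : t ^ ρ = t ^ ((ρ:ℝ)/2) * t ^ ((ρ:ℝ)/2) := by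
    rw [← Real.rpow_natCast t ρ, ← Real.rpow_add ht]
    norm_num
  have htp : (1 / t) ^ (ρ + 2) = 1 / (t ^ ρ * t ^ 2) := by
    rw [div_pow, one_pow, pow_add]
  rw [hst, hsπ, hπ2, ht2, htp, hX]
  have h2 : t ^ ((ρ:ℝ)/2) > 0 := Real.rpow_pos_of_pos ht _
  have h3 : (0:ℝ) < (ρ:ℝ) + 2 := by positivity
  field_simp
end

section
/- For ρ ≥ 0, t > 0, κ ∈ ℝ, and λ > 0, the volume of the set {(α₁,α₂,β₁,…,β_ρ) ∈ ℝ^(ρ+2) : α₁² + (κα₁ + λα₂)² ≤ 1/t² and β₁² + ⋯ + β_ρ² ≤ t(α₁² + α₂²)} equals (π^(ρ/2) / ((ρ+2)·Γ(ρ/2+1)·λ·t^((ρ+4)/2))) · ∫₀^{2π} (cos²θ + (1/λ²)(sinθ - κcosθ)²)^(ρ/2) dθ. -/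
open MeasureTheory Real

section
variable (ρ : ℕ) (t κ l : ℝ)

noncomputable def cC : ℝ := π ^ ((ρ : ℝ) / 2) / Real.Gamma ((ρ : ℝ) / 2 + 1)
def eE : Set (ℝ × ℝ) := {ab | ab.1 ^ 2 + (κ * ab.1 + l * ab.2) ^ 2 ≤ 1 / t ^ 2}
noncomputable def gG : ℝ × ℝ → ℝ := fun ab => cC ρ * (t * (ab.1 ^ 2 + ab.2 ^ 2)) ^ ((ρ : ℝ) / 2)

lemma sqrt_pow_eq_rpow (R : ℝ) (hR : 0 ≤ R) (n : ℕ) :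
    Real.sqrt R ^ n = R ^ ((n : ℝ) / 2) := by
  rw [Real.sqrt_eq_rpow, ← Real.rpow_natCast (R ^ ((1:ℝ)/2)) n, ← Real.rpow_mul hR]
  ring_nf

lemma aux_ball_volume (R : ℝ) (hR : 0 ≤ R) :
    volume {β : Fin ρ → ℝ | ∑ j, (β j) ^ 2 ≤ R}
      = ENNReal.ofReal (cC ρ * R ^ ((ρ : ℝ) / 2)) := by
  rcases Nat.eq_zero_or_pos ρ with h0 | hpos
  · subst h0
    have : {β : Fin 0 → ℝ | ∑ j, (β j) ^ 2 ≤ R} = Set.univ := by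
      ext β; simp [hR]
    rw [this]
    rw [MeasureTheory.volume_pi, MeasureTheory.Measure.pi_univ]
    simp [cC, Real.Gamma_one, hR]
  · haveI : Nonempty (Fin ρ) := ⟨⟨0, hpos⟩⟩
    have hmp := EuclideanSpace.volume_preserving_symm_measurableEquiv_toLp (Fin ρ)
    have hms : MeasurableSet {β : Fin ρ → ℝ | ∑ j, (β j) ^ 2 ≤ R} := by
      apply measurableSet_le _ measurable_const
      exact Finset.measurable_sum _ (fun j _ => (measurable_pi_apply j).pow_const 2)
    rw [← hmp.measure_preimage hms.nullMeasurableSet]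
    have hpre : (MeasurableEquiv.toLp 2 (Fin ρ → ℝ)).symm ⁻¹' {β : Fin ρ → ℝ | ∑ j, (β j) ^ 2 ≤ R}
        = Metric.closedBall (0 : EuclideanSpace ℝ (Fin ρ)) (Real.sqrt R) := by
      ext x
      simp only [Set.mem_preimage, Set.mem_setOf_eq, Metric.mem_closedBall, dist_zero_right,
        EuclideanSpace.norm_eq, Real.norm_eq_abs, sq_abs]
      have hx : (MeasurableEquiv.toLp 2 (Fin ρ → ℝ)).symm x = x.ofLp := rfl
      rw [hx, ← Real.sqrt_le_sqrt_iff hR]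
    rw [hpre, EuclideanSpace.volume_closedBall]
    rw [← ENNReal.ofReal_pow (Real.sqrt_nonneg R), ← ENNReal.ofReal_mul (by positivity)]
    congr 1
    rw [Fintype.card_fin, sqrt_pow_eq_rpow R hR ρ, sqrt_pow_eq_rpow π Real.pi_pos.le ρ]
    rw [cC]
    ring

lemma hE_meas : MeasurableSet (eE t κ l) := by
  apply measurableSet_le
  · exact ((continuous_fst.pow 2).add
      (((continuous_const.mul continuous_fst).add
        (continuous_const.mul continuous_snd)).pow 2)).measurable
  · exact measurable_const

lemma hg_cont : Continuous (gG ρ t) := by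
  apply Continuous.mul continuous_const
  apply Continuous.rpow_const
  · exact continuous_const.mul ((continuous_fst.pow 2).add (continuous_snd.pow 2))
  · intro x; exact Or.inr (by positivity)

lemma step1 (ht : 0 < t) :
    volume {p : ℝ × ℝ × (Fin ρ → ℝ) |
        p.1 ^ 2 + (κ * p.1 + l * p.2.1) ^ 2 ≤ 1 / t ^ 2 ∧
        (∑ j, (p.2.2 j) ^ 2) ≤ t * (p.1 ^ 2 + p.2.1 ^ 2)}
      = ∫⁻ ab : ℝ × ℝ, (eE t κ l).indicator (fun ab => ENNReal.ofReal (gG ρ t ab)) ab := by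
  have hsum : Measurable fun p : ℝ × ℝ × (Fin ρ → ℝ) => ∑ j, (p.2.2 j) ^ 2 :=
    Finset.measurable_sum _ fun j _ =>
      ((measurable_pi_apply j).comp (measurable_snd.comp measurable_snd)).pow_const 2
  have hrhs : Measurable fun p : ℝ × ℝ × (Fin ρ → ℝ) => t * (p.1 ^ 2 + p.2.1 ^ 2) :=
    (measurable_const.mul ((measurable_fst.pow_const 2).add
      ((measurable_fst.comp measurable_snd).pow_const 2)))
  have hc1 : Measurable fun p : ℝ × ℝ × (Fin ρ → ℝ) =>
      p.1 ^ 2 + (κ * p.1 + l * p.2.1) ^ 2 :=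
    (measurable_fst.pow_const 2).add ((measurable_const.mul measurable_fst |>.add
      (measurable_const.mul (measurable_fst.comp measurable_snd))).pow_const 2)
  have hS : MeasurableSet {p : ℝ × ℝ × (Fin ρ → ℝ) |
      p.1 ^ 2 + (κ * p.1 + l * p.2.1) ^ 2 ≤ 1 / t ^ 2 ∧
      (∑ j, (p.2.2 j) ^ 2) ≤ t * (p.1 ^ 2 + p.2.1 ^ 2)} := by
    exact (measurableSet_le hc1 measurable_const).inter (measurableSet_le hsum hrhs)
  rw [Measure.volume_eq_prod, Measure.prod_apply hS]
  have hinner : ∀ a : ℝ, (volume : Measure (ℝ × (Fin ρ → ℝ)))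
        (Prod.mk a ⁻¹' {p : ℝ × ℝ × (Fin ρ → ℝ) |
          p.1 ^ 2 + (κ * p.1 + l * p.2.1) ^ 2 ≤ 1 / t ^ 2 ∧
          (∑ j, (p.2.2 j) ^ 2) ≤ t * (p.1 ^ 2 + p.2.1 ^ 2)})
      = ∫⁻ b : ℝ, (eE t κ l).indicator (fun ab => ENNReal.ofReal (gG ρ t ab)) (a, b) := by
    intro a
    rw [Measure.volume_eq_prod, Measure.prod_apply (measurable_prodMk_left hS)]
    apply lintegral_congr
    intro b
    have hset : (Prod.mk b ⁻¹' (Prod.mk a ⁻¹' {p : ℝ × ℝ × (Fin ρ → ℝ) |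
          p.1 ^ 2 + (κ * p.1 + l * p.2.1) ^ 2 ≤ 1 / t ^ 2 ∧
          (∑ j, (p.2.2 j) ^ 2) ≤ t * (p.1 ^ 2 + p.2.1 ^ 2)}))
        = {β : Fin ρ → ℝ | a ^ 2 + (κ * a + l * b) ^ 2 ≤ 1 / t ^ 2 ∧
            ∑ j, (β j) ^ 2 ≤ t * (a ^ 2 + b ^ 2)} := rfl
    rw [hset]
    by_cases hab : (a, b) ∈ eE t κ l
    · have hmem : a ^ 2 + (κ * a + l * b) ^ 2 ≤ 1 / t ^ 2 := hab
      have : {β : Fin ρ → ℝ | a ^ 2 + (κ * a + l * b) ^ 2 ≤ 1 / t ^ 2 ∧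
            ∑ j, (β j) ^ 2 ≤ t * (a ^ 2 + b ^ 2)}
          = {β : Fin ρ → ℝ | ∑ j, (β j) ^ 2 ≤ t * (a ^ 2 + b ^ 2)} := by
        ext β; exact ⟨fun h => h.2, fun h => ⟨hmem, h⟩⟩
      rw [this, aux_ball_volume ρ _ (by positivity), Set.indicator_of_mem hab]
      rfl
    · have hmem : ¬ (a ^ 2 + (κ * a + l * b) ^ 2 ≤ 1 / t ^ 2) := hab
      have : {β : Fin ρ → ℝ | a ^ 2 + (κ * a + l * b) ^ 2 ≤ 1 / t ^ 2 ∧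
            ∑ j, (β j) ^ 2 ≤ t * (a ^ 2 + b ^ 2)} = ∅ := by
        ext β
        simp only [Set.mem_setOf_eq, Set.mem_empty_iff_false, iff_false]
        exact fun h => hmem h.1
      rw [this, Set.indicator_of_notMem hab]
      simp
  simp_rw [hinner]
  rw [← MeasureTheory.lintegral_prod]
  · rfl
  · apply AEMeasurable.indicator
    · exact (ENNReal.measurable_ofReal.comp (hg_cont ρ t).measurable).aemeasurable
    · exact hE_meas t κ l

def dD : Set (ℝ × ℝ) := {uv | uv.1 ^ 2 + uv.2 ^ 2 ≤ 1 / t ^ 2}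
noncomputable def hH : ℝ × ℝ → ℝ :=
  fun uv => cC ρ * (t * (uv.1 ^ 2 + ((uv.2 - κ * uv.1) / l) ^ 2)) ^ ((ρ : ℝ) / 2)

lemma hD_meas : MeasurableSet (dD t) :=
  measurableSet_le ((continuous_fst.pow 2).add (continuous_snd.pow 2)).measurable
    measurable_const

lemma hH_cont (hl : 0 < l) : Continuous (hH ρ t κ l) := by
  apply Continuous.mul continuous_const
  apply Continuous.rpow_const
  · exact continuous_const.mul ((continuous_fst.pow 2).add
      (((continuous_snd.sub (continuous_const.mul continuous_fst)).div_const l).pow 2))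
  · intro x; exact Or.inr (by positivity)

lemma step2 (hl : 0 < l) :
    ∫⁻ ab : ℝ × ℝ, (eE t κ l).indicator (fun ab => ENNReal.ofReal (gG ρ t ab)) ab
      = ENNReal.ofReal l⁻¹ *
        ∫⁻ uv : ℝ × ℝ, (dD t).indicator (fun uv => ENNReal.ofReal (hH ρ t κ l uv)) uv := by
  have hl0 : l ≠ 0 := ne_of_gt hl
  set L : (ℝ × ℝ) →ₗ[ℝ] (ℝ × ℝ) :=
    Matrix.toLin (Module.Basis.finTwoProd ℝ) (Module.Basis.finTwoProd ℝ) !![(1:ℝ), 0; -κ/l, 1/l] with hLdef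
  have hLapp : ∀ uv : ℝ × ℝ, L uv = (uv.1, -κ/l * uv.1 + 1/l * uv.2) := by
    intro uv
    rw [hLdef, Matrix.toLin_finTwoProd_apply]
    simp
  have hdet : LinearMap.det L = 1 / l := by
    rw [hLdef, LinearMap.det_toLin]
    simp [Matrix.det_fin_two_of]
  have hdet0 : LinearMap.det L ≠ 0 := by
    rw [hdet]; exact one_div_ne_zero hl0
  have hmap := Measure.map_linearMap_addHaar_eq_smul_addHaar volume hdet0
  rw [hdet] at hmap
  have habs : |(1 / l)⁻¹| = l := by
    rw [one_div, inv_inv, abs_of_pos hl]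
  rw [habs] at hmap
  have hFmeas : Measurable fun ab : ℝ × ℝ =>
      (eE t κ l).indicator (fun ab => ENNReal.ofReal (gG ρ t ab)) ab :=
    (ENNReal.measurable_ofReal.comp (hg_cont ρ t).measurable).indicator (hE_meas t κ l)
  have hmeq := MeasureTheory.lintegral_map hFmeas
    (LinearMap.continuous_of_finiteDimensional L).measurable (μ := volume)
  rw [hmap, lintegral_smul_measure] at hmeq
  have hcomp : ∀ uv : ℝ × ℝ,
      (eE t κ l).indicator (fun ab => ENNReal.ofReal (gG ρ t ab)) (L uv)
        = (dD t).indicator (fun uv => ENNReal.ofReal (hH ρ t κ l uv)) uv := by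
    intro uv
    rw [hLapp]
    have hmemiff : (uv.1, -κ/l * uv.1 + 1/l * uv.2) ∈ eE t κ l ↔ uv ∈ dD t := by
      simp only [eE, dD, Set.mem_setOf_eq]
      have : κ * uv.1 + l * (-κ/l * uv.1 + 1/l * uv.2) = uv.2 := by field_simp; ring
      rw [this]
    have hval : gG ρ t (uv.1, -κ/l * uv.1 + 1/l * uv.2) = hH ρ t κ l uv := by
      simp only [gG, hH]
      congr 2
      field_simp
      ring
    by_cases h : uv ∈ dD t
    · rw [Set.indicator_of_mem (hmemiff.mpr h), Set.indicator_of_mem h, hval]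
    · rw [Set.indicator_of_notMem (fun hc => h (hmemiff.mp hc)), Set.indicator_of_notMem h]
  simp_rw [hcomp] at hmeq
  rw [← hmeq, smul_eq_mul, ← mul_assoc, ← ENNReal.ofReal_mul (by positivity), inv_mul_cancel₀ hl0,
    ENNReal.ofReal_one, one_mul]

lemma dD_compact (ht : 0 < t) : IsCompact (dD t) := by
  apply Metric.isCompact_of_isClosed_isBounded
  · exact isClosed_le ((continuous_fst.pow 2).add (continuous_snd.pow 2)) continuous_const
  · apply (Metric.isBounded_closedBall (x := (0 : ℝ × ℝ)) (r := 1 / t)).subset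
    intro uv huv
    have h1 : uv.1 ^ 2 + uv.2 ^ 2 ≤ 1 / t ^ 2 := huv
    have h1t : (0:ℝ) < 1 / t := by positivity
    have h2 : (1 / t ^ 2 : ℝ) = (1 / t) ^ 2 := by field_simp
    rw [h2] at h1
    simp only [Metric.mem_closedBall, dist_zero_right, Prod.norm_def, Real.norm_eq_abs,
      max_le_iff]
    constructor
    · rw [abs_le]
      constructor <;> nlinarith [sq_nonneg uv.1, sq_nonneg uv.2, sq_nonneg (uv.1 - 1/t),
        sq_nonneg (uv.1 + 1/t)]
    · rw [abs_le]
      constructor <;> nlinarith [sq_nonneg uv.1, sq_nonneg uv.2, sq_nonneg (uv.2 - 1/t),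
        sq_nonneg (uv.2 + 1/t)]

lemma step3 (ht : 0 < t) (hl : 0 < l) :
    ∫⁻ uv : ℝ × ℝ, (dD t).indicator (fun uv => ENNReal.ofReal (hH ρ t κ l uv)) uv
      = ENNReal.ofReal (∫ uv in dD t, hH ρ t κ l uv) := by
  rw [lintegral_indicator (hD_meas t)]
  rw [← MeasureTheory.ofReal_integral_eq_lintegral_ofReal]
  · exact ((hH_cont ρ t κ l hl).continuousOn).integrableOn_compact (dD_compact t ht)
  · apply Filter.Eventually.of_forall
    intro uv
    have h := Real.pi_pos
    simp only [hH, cC, Pi.zero_apply]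
    positivity

lemma rpow_sq_half (ρ : ℕ) (r : ℝ) (hr : 0 ≤ r) : (r ^ 2) ^ ((ρ : ℝ) / 2) = r ^ ρ := by
  rw [← Real.rpow_natCast r 2, ← Real.rpow_mul hr, ← Real.rpow_natCast r ρ]
  congr 1
  ring

open intervalIntegral in
lemma step4 (ht : 0 < t) (hl : 0 < l) :
    ∫ uv in dD t, hH ρ t κ l uv
      = (cC ρ * t ^ ((ρ : ℝ) / 2) * ((1 / t) ^ (ρ + 2) / ((ρ : ℝ) + 2))) *
        ∫ θ in (0 : ℝ)..(2 * π),
          (Real.cos θ ^ 2 + (1 / l ^ 2) * (Real.sin θ - κ * Real.cos θ) ^ 2) ^ ((ρ : ℝ) / 2) := by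
  have hπ := Real.pi_pos
  set fl : ℝ → ℝ := fun θ =>
    Real.cos θ ^ 2 + (1 / l ^ 2) * (Real.sin θ - κ * Real.cos θ) ^ 2 with hfl
  have hfl_nonneg : ∀ θ, 0 ≤ fl θ := fun θ => by positivity
  set A : Set (ℝ × ℝ) :=
    {p | (p.1 * Real.cos p.2) ^ 2 + (p.1 * Real.sin p.2) ^ 2 ≤ 1 / t ^ 2} with hA
  have hA_meas : MeasurableSet A := by
    apply measurableSet_le _ measurable_const
    exact (((continuous_fst.mul (Real.continuous_cos.comp continuous_snd)).pow 2).add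
      ((continuous_fst.mul (Real.continuous_sin.comp continuous_snd)).pow 2)).measurable
  rw [← MeasureTheory.integral_indicator (hD_meas t),
    ← integral_comp_polarCoord_symm (fun uv => (dD t).indicator (hH ρ t κ l) uv)]
  have htgt : polarCoord.target = Set.Ioi (0:ℝ) ×ˢ Set.Ioo (-π) π := rfl
  have hstep : ∫ p in polarCoord.target, p.1 • (dD t).indicator (hH ρ t κ l) (polarCoord.symm p)
      = ∫ p in polarCoord.target, A.indicator (fun p => p.1 * hH ρ t κ l (polarCoord.symm p)) p := by
    apply MeasureTheory.integral_congr_ae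
    apply Filter.Eventually.of_forall
    intro p
    dsimp only
    have hmem : polarCoord.symm p ∈ dD t ↔ p ∈ A := by
      rw [polarCoord_symm_apply]
      exact Iff.rfl
    by_cases h : p ∈ A
    · rw [Set.indicator_of_mem (hmem.mpr h), Set.indicator_of_mem h, smul_eq_mul]
    · rw [Set.indicator_of_notMem (fun hc => h (hmem.mp hc)), Set.indicator_of_notMem h,
        smul_zero]
  rw [hstep, setIntegral_indicator hA_meas]
  have hset : polarCoord.target ∩ A = Set.Ioc 0 (1/t) ×ˢ Set.Ioo (-π) π := by
    rw [htgt]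
    ext p
    simp only [Set.mem_inter_iff, Set.mem_prod, Set.mem_Ioi, Set.mem_Ioo, Set.mem_Ioc, hA,
      Set.mem_setOf_eq]
    have hsq : (p.1 * Real.cos p.2) ^ 2 + (p.1 * Real.sin p.2) ^ 2 = p.1 ^ 2 := by
      have := Real.sin_sq_add_cos_sq p.2
      nlinarith [this]
    have h1t : (0:ℝ) < 1/t := by positivity
    have hq : (1 / t^2 : ℝ) = (1/t)^2 := by field_simp
    rw [hsq, hq]
    constructor
    · rintro ⟨⟨h1, h2⟩, h3⟩
      refine ⟨⟨h1, ?_⟩, h2⟩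
      nlinarith [h1t, h1, h3]
    · rintro ⟨⟨h1, h2⟩, h3⟩
      exact ⟨⟨h1, h3⟩, by nlinarith [h1.le, h2, h1t]⟩
  rw [hset]
  have hptwise : ∀ p : ℝ × ℝ, p ∈ Set.Ioc (0:ℝ) (1/t) ×ˢ Set.Ioo (-π) π →
      p.1 * hH ρ t κ l (polarCoord.symm p)
        = (cC ρ * t ^ ((ρ : ℝ)/2) * p.1 ^ (ρ + 1)) * fl p.2 ^ ((ρ : ℝ)/2) := by
    rintro ⟨r, θ⟩ ⟨hr, hθ⟩
    simp only [Set.mem_Ioc] at hr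
    have hr0 : 0 < r := hr.1
    rw [polarCoord_symm_apply]
    simp only [hH]
    have hbase : t * ((r * Real.cos θ) ^ 2 + ((r * Real.sin θ - κ * (r * Real.cos θ)) / l) ^ 2)
        = t * r ^ 2 * fl θ := by
      rw [hfl]
      field_simp
    rw [hbase]
    rw [Real.mul_rpow (by positivity) (hfl_nonneg θ),
      Real.mul_rpow ht.le (by positivity), rpow_sq_half ρ r hr0.le]
    ring
  rw [setIntegral_congr_fun (measurableSet_Ioc.prod measurableSet_Ioo) hptwise]
  rw [Measure.volume_eq_prod, setIntegral_prod_mul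
    (fun r : ℝ => cC ρ * t ^ ((ρ : ℝ)/2) * r ^ (ρ + 1))
    (fun θ : ℝ => fl θ ^ ((ρ : ℝ)/2))]
  have hr_int : ∫ r in Set.Ioc (0:ℝ) (1/t), cC ρ * t ^ ((ρ : ℝ)/2) * r ^ (ρ + 1)
      = cC ρ * t ^ ((ρ : ℝ)/2) * ((1/t) ^ (ρ + 2) / ((ρ : ℝ) + 2)) := by
    rw [MeasureTheory.integral_const_mul, ← intervalIntegral.integral_of_le (by positivity),
      integral_pow]
    congr 1
    rw [zero_pow (by omega)]
    push_cast
    ring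
  have hθ_int : ∫ θ in Set.Ioo (-π) π, fl θ ^ ((ρ : ℝ)/2)
      = ∫ θ in (0:ℝ)..(2*π), fl θ ^ ((ρ : ℝ)/2) := by
    have hper : Function.Periodic (fun θ => fl θ ^ ((ρ : ℝ)/2)) (2*π) := by
      intro x
      simp only [hfl, Real.cos_add_two_pi, Real.sin_add_two_pi]
    have h2 := hper.intervalIntegral_add_eq (-π) 0
    rw [zero_add] at h2
    rw [← MeasureTheory.integral_Ioc_eq_integral_Ioo,
      ← intervalIntegral.integral_of_le (by linarith), ← h2]
    congr 1
    ring
  rw [hr_int, hθ_int]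

/-- For `ρ ≥ 0`, `t > 0`, `κ ∈ ℝ`, `λ > 0`, the volume of
`{(α₁,α₂,β) : α₁² + (κα₁+λα₂)² ≤ 1/t², Σ βⱼ² ≤ t(α₁²+α₂²)}` equals
`(π^(ρ/2) / ((ρ+2)·Γ(ρ/2+1)·λ·t^((ρ+4)/2))) · ∫₀^{2π} (cos²θ + (1/λ²)(sinθ-κcosθ)²)^(ρ/2) dθ`. -/
theorem volume_sheared_region (ρ : ℕ) (t κ l : ℝ) (ht : 0 < t) (hl : 0 < l) :
    volume {p : ℝ × ℝ × (Fin ρ → ℝ) |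
        p.1 ^ 2 + (κ * p.1 + l * p.2.1) ^ 2 ≤ 1 / t ^ 2 ∧
        (∑ j, (p.2.2 j) ^ 2) ≤ t * (p.1 ^ 2 + p.2.1 ^ 2)}
      = ENNReal.ofReal
          (π ^ ((ρ : ℝ) / 2) /
              (((ρ : ℝ) + 2) * Real.Gamma ((ρ : ℝ) / 2 + 1) * l * t ^ (((ρ : ℝ) + 4) / 2)) *
            ∫ θ in (0 : ℝ)..(2 * π),
              (Real.cos θ ^ 2 + (1 / l ^ 2) * (Real.sin θ - κ * Real.cos θ) ^ 2)
                ^ ((ρ : ℝ) / 2)) := by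
  rw [step1 ρ t κ l ht, step2 ρ t κ l hl, step3 ρ t κ l ht hl, step4 ρ t κ l ht hl,
    ← ENNReal.ofReal_mul (by positivity), ← mul_assoc]
  congr 1
  congr 1
  have hG : 0 < Real.Gamma ((ρ : ℝ) / 2 + 1) := Real.Gamma_pos_of_pos (by positivity)
  have hkey : t ^ (((ρ:ℝ) + 4) / 2) * t ^ ((ρ:ℝ) / 2) = t ^ (ρ + 2 : ℕ) := by
    rw [← Real.rpow_add ht, ← Real.rpow_natCast t (ρ + 2)]
    congr 1
    push_cast
    ring
  have h1 : ((1:ℝ)/t) ^ (ρ + 2) = 1 / t ^ (ρ + 2 : ℕ) := by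
    rw [div_pow, one_pow]
  rw [cC, h1, ← hkey]
  have hT1 : (0:ℝ) < t ^ ((ρ:ℝ) / 2) := Real.rpow_pos_of_pos ht _
  have hT2 : (0:ℝ) < t ^ (((ρ:ℝ) + 4) / 2) := Real.rpow_pos_of_pos ht _
  have hρ2 : ((ρ:ℝ) + 2) ≠ 0 := by positivity
  field_simp

end
end

section
/- Let ⟨-,-⟩ be a symmetric bilinear form of signature (2,ρ) on V = ℝ^(ρ+2), let φ ∈ V ⊗ ℂ be such that Re(φ), Im(φ) span a positive definite 2-plane with ⟨Re φ, Re φ⟩ = ⟨Im φ, Im φ⟩ = t > 0 and ⟨Re φ, Im φ⟩ = 0. Then the set Υ = {v ∈ V : ⟨v,v⟩ ≥ 0, ⟨Re φ, v⟩² + ⟨Im φ, v⟩² ≤ 1} has Lebesgue volume 2π^((ρ+2)/2) / ((ρ+2)·Γ(ρ/2+1)·t^((ρ+2)/2)·√|Disc|), where Disc is the determinant of the Gram matrix of ⟨-,-⟩ in the standard basis of V. -/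
open MeasureTheory Real

open MeasureTheory Real Set Metric
open scoped ENNReal

local notation "dim" => Module.finrank ℝ

theorem my_lintegral_fun_norm_addHaar {E : Type*} [NormedAddCommGroup E] [NormedSpace ℝ E]
    [MeasurableSpace E] [BorelSpace E] [FiniteDimensional ℝ E] [Nontrivial E]
    (μ : Measure E) [μ.IsAddHaarMeasure] (f : ℝ → ℝ≥0∞) (hf : Measurable f) :
    ∫⁻ x, f ‖x‖ ∂μ = (dim E) * μ (ball 0 1) *
      ∫⁻ y in Set.Ioi (0:ℝ), ENNReal.ofReal (y ^ (dim E - 1)) * f y := by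
  have hmeas : Measurable (fun y : sphere (0:E) 1 × Ioi (0:ℝ) => f ↑y.2) :=
    hf.comp (measurable_subtype_coe.comp measurable_snd)
  calc ∫⁻ x, f ‖x‖ ∂μ
      = ∫⁻ x in ({0}ᶜ : Set E), f ‖x‖ ∂μ := by rw [restrict_compl_singleton]
    _ = ∫⁻ x : ({0}ᶜ : Set E), f ‖(x : E)‖ ∂(μ.comap Subtype.val) :=
        (lintegral_subtype_comap (measurableSet_singleton 0).compl _).symm
    _ = ∫⁻ y : sphere (0:E) 1 × Ioi (0:ℝ), f ↑y.2
          ∂(μ.toSphere.prod (.volumeIoiPow (dim E - 1))) := by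
        rw [← MeasurePreserving.lintegral_comp
          (μ.measurePreserving_homeomorphUnitSphereProd) hmeas]
        exact lintegral_congr fun x => by simp
    _ = μ.toSphere univ * ∫⁻ r : Ioi (0:ℝ), f r ∂(Measure.volumeIoiPow (dim E - 1)) := by
        rw [lintegral_prod _ hmeas.aemeasurable]
        simp [lintegral_const, mul_comm]
    _ = _ := by
        rw [Measure.toSphere_apply_univ, Measure.volumeIoiPow,
          lintegral_withDensity_eq_lintegral_mul _
            ((measurable_subtype_coe.pow_const _).ennreal_ofReal)
            (g := fun r : Ioi (0:ℝ) => f ↑r) (hf.comp measurable_subtype_coe),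
          ]
        simp only [Pi.mul_apply]
        rw [lintegral_subtype_comap measurableSet_Ioi
          (fun y => ENNReal.ofReal (y ^ (dim E - 1)) * f y)]

theorem my_volume_pi_sum_sq_le (ρ : ℕ) (r2 : ℝ) (h : 0 ≤ r2) :
    volume {w : Fin ρ → ℝ | ∑ k, w k ^ 2 ≤ r2}
      = (ENNReal.ofReal (Real.sqrt r2)) ^ ρ *
        ENNReal.ofReal (Real.sqrt π ^ ρ / Real.Gamma (ρ / 2 + 1)) := by
  have hset : (MeasurableEquiv.toLp 2 (Fin ρ → ℝ)).symm ⁻¹'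
      {w : Fin ρ → ℝ | ∑ k, w k ^ 2 ≤ r2} = closedBall 0 (Real.sqrt r2) := by
    ext x
    have hx : ‖x‖ = Real.sqrt (∑ k, x k ^ 2) := by
      rw [EuclideanSpace.norm_eq]
      congr 1
      exact Finset.sum_congr rfl fun k _ => (sq_abs _)
    have hsum : (0:ℝ) ≤ ∑ k, x k ^ 2 := Finset.sum_nonneg fun k _ => sq_nonneg _
    simp only [Set.mem_preimage, Set.mem_setOf_eq, mem_closedBall, dist_zero_right, hx]
    constructor
    · intro hs
      exact Real.sqrt_le_sqrt hs
    · intro hs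
      calc ∑ k, x k ^ 2 = Real.sqrt (∑ k, x k ^ 2) ^ 2 := (Real.sq_sqrt hsum).symm
        _ ≤ Real.sqrt r2 ^ 2 := by
            exact pow_le_pow_left₀ (Real.sqrt_nonneg _) hs 2
        _ = r2 := Real.sq_sqrt h
  rw [← (EuclideanSpace.volume_preserving_symm_measurableEquiv_toLp (Fin ρ)).measure_preimage
    (by exact (measurableSet_le (by fun_prop) measurable_const).nullMeasurableSet), hset]
  rcases Nat.eq_zero_or_pos ρ with hρ | hρ
  · subst hρ
    have : closedBall (0 : EuclideanSpace ℝ (Fin 0)) (Real.sqrt r2) = Set.univ := by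
      ext x
      simp [mem_closedBall, Real.sqrt_nonneg, Subsingleton.elim x 0]
    rw [this]
    simp [volume_euclideanSpace_eq_dirac, Real.Gamma_one]
  · haveI : Nonempty (Fin ρ) := ⟨⟨0, hρ⟩⟩
    rw [EuclideanSpace.volume_closedBall]
    simp [Fintype.card_fin]

theorem my_volume_T (ρ : ℕ) (t : ℝ) (ht : 0 < t) :
    volume {q : (Fin 2 → ℝ) × (Fin ρ → ℝ) |
        (∑ k, q.2 k ^ 2 ≤ q.1 0 ^ 2 + q.1 1 ^ 2) ∧ t * (q.1 0 ^ 2 + q.1 1 ^ 2) ≤ 1}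
      = ENNReal.ofReal (2 * π ^ (((ρ:ℝ) + 2) / 2) /
          (((ρ:ℝ) + 2) * Real.Gamma ((ρ:ℝ) / 2 + 1) * t ^ (((ρ:ℝ) + 2) / 2))) := by
  set C : ℝ≥0∞ := ENNReal.ofReal (Real.sqrt π ^ ρ / Real.Gamma (ρ / 2 + 1)) with hC
  set R : ℝ := Real.sqrt t⁻¹ with hR
  have hRpos : 0 < R := Real.sqrt_pos.2 (inv_pos.2 ht)
  have hcond : ∀ y : ℝ, 0 ≤ y → (t * y ^ 2 ≤ 1 ↔ y ≤ R) := by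
    intro y hy
    rw [hR, show (t⁻¹ : ℝ) = 1 / t by ring, Real.le_sqrt hy, le_div_iff₀ ht]
    · constructor <;> intro h <;> nlinarith
    · positivity
  set g : ℝ → ℝ≥0∞ := fun r => if t * r ^ 2 ≤ 1 then (ENNReal.ofReal r) ^ ρ * C else 0
    with hg
  have hgmeas : Measurable g := by
    apply Measurable.ite _ _ measurable_const
    · exact measurableSet_le (by fun_prop) measurable_const
    · fun_prop
  -- the set is measurable
  have hT : MeasurableSet {q : (Fin 2 → ℝ) × (Fin ρ → ℝ) |
      (∑ k, q.2 k ^ 2 ≤ q.1 0 ^ 2 + q.1 1 ^ 2) ∧ t * (q.1 0 ^ 2 + q.1 1 ^ 2) ≤ 1} := by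
    have m1 : Measurable fun q : (Fin 2 → ℝ) × (Fin ρ → ℝ) => ∑ k, q.2 k ^ 2 := by
      apply Finset.measurable_sum
      intro k _
      fun_prop
    have m2 : Measurable fun q : (Fin 2 → ℝ) × (Fin ρ → ℝ) => q.1 0 ^ 2 + q.1 1 ^ 2 := by
      fun_prop
    exact (measurableSet_le m1 m2).inter (measurableSet_le (m2.const_mul t) measurable_const)
  rw [Measure.volume_eq_prod, Measure.prod_apply hT]
  -- compute slices
  have hslice : ∀ p : Fin 2 → ℝ,
      volume (Prod.mk p ⁻¹' {q : (Fin 2 → ℝ) × (Fin ρ → ℝ) |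
        (∑ k, q.2 k ^ 2 ≤ q.1 0 ^ 2 + q.1 1 ^ 2) ∧ t * (q.1 0 ^ 2 + q.1 1 ^ 2) ≤ 1})
      = if t * (p 0 ^ 2 + p 1 ^ 2) ≤ 1 then
          (ENNReal.ofReal (Real.sqrt (p 0 ^ 2 + p 1 ^ 2))) ^ ρ * C else 0 := by
    intro p
    by_cases hp : t * (p 0 ^ 2 + p 1 ^ 2) ≤ 1
    · rw [if_pos hp]
      have : Prod.mk p ⁻¹' {q : (Fin 2 → ℝ) × (Fin ρ → ℝ) |
          (∑ k, q.2 k ^ 2 ≤ q.1 0 ^ 2 + q.1 1 ^ 2) ∧ t * (q.1 0 ^ 2 + q.1 1 ^ 2) ≤ 1}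
          = {w : Fin ρ → ℝ | ∑ k, w k ^ 2 ≤ p 0 ^ 2 + p 1 ^ 2} := by
        ext w; simp [hp]
      rw [this, my_volume_pi_sum_sq_le _ _ (by positivity)]
    · rw [if_neg hp]
      have : Prod.mk p ⁻¹' {q : (Fin 2 → ℝ) × (Fin ρ → ℝ) |
          (∑ k, q.2 k ^ 2 ≤ q.1 0 ^ 2 + q.1 1 ^ 2) ∧ t * (q.1 0 ^ 2 + q.1 1 ^ 2) ≤ 1}
          = ∅ := by
        ext w; simp [hp]
      rw [this, measure_empty]
  calc ∫⁻ p : Fin 2 → ℝ, volume (Prod.mk p ⁻¹' {q : (Fin 2 → ℝ) × (Fin ρ → ℝ) |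
        (∑ k, q.2 k ^ 2 ≤ q.1 0 ^ 2 + q.1 1 ^ 2) ∧ t * (q.1 0 ^ 2 + q.1 1 ^ 2) ≤ 1})
      = ∫⁻ x : EuclideanSpace ℝ (Fin 2), g ‖x‖ := by
        rw [← (EuclideanSpace.volume_preserving_symm_measurableEquiv_toLp (Fin 2)).lintegral_comp
          (f := fun p : Fin 2 → ℝ => volume (Prod.mk p ⁻¹' {q : (Fin 2 → ℝ) × (Fin ρ → ℝ) |
            (∑ k, q.2 k ^ 2 ≤ q.1 0 ^ 2 + q.1 1 ^ 2) ∧ t * (q.1 0 ^ 2 + q.1 1 ^ 2) ≤ 1}))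
          (by
            simp only [hslice]
            apply Measurable.ite _ _ measurable_const
            · exact measurableSet_le (by fun_prop) measurable_const
            · exact ((Real.continuous_sqrt.measurable.comp (by fun_prop)).ennreal_ofReal.pow_const ρ).mul_const C)]
        refine lintegral_congr fun x => ?_
        have he : ∀ i, (MeasurableEquiv.toLp 2 (Fin 2 → ℝ)).symm x i = x i := fun _ => rfl
        have hnorm : ‖x‖ = Real.sqrt (x 0 ^ 2 + x 1 ^ 2) := by
          rw [EuclideanSpace.norm_eq]
          congr 1
          rw [Fin.sum_univ_two]
          simp [sq_abs]
        have hsq : ‖x‖ ^ 2 = x 0 ^ 2 + x 1 ^ 2 := by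
          rw [hnorm, Real.sq_sqrt (by positivity)]
        rw [hslice, hg, he, he]
        simp only [← hsq, ← hnorm]
        rw [Real.sqrt_sq (norm_nonneg x)]
    _ = 2 * volume (ball (0 : EuclideanSpace ℝ (Fin 2)) 1) *
          ∫⁻ y in Set.Ioi (0:ℝ), ENNReal.ofReal (y ^ 1) * g y := by
        rw [my_lintegral_fun_norm_addHaar _ g hgmeas]
        norm_num [finrank_euclideanSpace]
    _ = ENNReal.ofReal (2 * π ^ (((ρ:ℝ) + 2) / 2) /
          (((ρ:ℝ) + 2) * Real.Gamma ((ρ:ℝ) / 2 + 1) * t ^ (((ρ:ℝ) + 2) / 2))) := by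
        have hball : volume (ball (0 : EuclideanSpace ℝ (Fin 2)) 1) = ENNReal.ofReal π := by
          rw [EuclideanSpace.volume_ball]
          norm_num [Fintype.card_fin, Real.sq_sqrt Real.pi_pos.le, Real.Gamma_two]
        have hint : ∫⁻ y in Set.Ioi (0:ℝ), ENNReal.ofReal (y ^ 1) * g y
            = ENNReal.ofReal (R ^ (ρ + 2) / ((ρ:ℝ) + 2)) * C := by
          have hcongr : ∫⁻ y in Set.Ioi (0:ℝ), ENNReal.ofReal (y ^ 1) * g y
              = ∫⁻ y in Set.Ioi (0:ℝ),
                  (Set.Ioc (0:ℝ) R).indicator (fun y => ENNReal.ofReal (y ^ (ρ + 1)) * C) y := by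
            refine setLIntegral_congr_fun measurableSet_Ioi (fun y hy => ?_)
            have hy0 : (0:ℝ) < y := hy
            by_cases hyR : y ≤ R
            · simp only [hg]
              rw [Set.indicator_of_mem (Set.mem_Ioc.2 ⟨hy0, hyR⟩)]
              rw [if_pos ((hcond y hy0.le).2 hyR)]
              rw [← ENNReal.ofReal_pow hy0.le, ← mul_assoc, ← ENNReal.ofReal_mul (by positivity)]
              rw [pow_one, ← pow_succ']
            · simp only [hg]
              rw [Set.indicator_of_notMem (by simp [Set.mem_Ioc, hyR]),
                if_neg (fun h => hyR ((hcond y hy0.le).1 h)), mul_zero]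
          rw [hcongr, lintegral_indicator measurableSet_Ioc,
            Measure.restrict_restrict measurableSet_Ioc,
            Set.inter_eq_left.2 (fun y hy => hy.1),
            lintegral_mul_const _ (by fun_prop)]
          congr 1
          rw [← ofReal_integral_eq_lintegral_ofReal
            ((intervalIntegral.intervalIntegrable_pow (ρ + 1)).1)
            ((ae_restrict_mem measurableSet_Ioc).mono fun y hy => pow_nonneg hy.1.le _)]
          rw [← intervalIntegral.integral_of_le hRpos.le, integral_pow]
          congr 1
          rw [show ρ + 1 + 1 = ρ + 2 by omega]
          push_cast
          ring
        rw [hball, hint, hC]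
        have hc0 : (0:ℝ) ≤ Real.sqrt π ^ ρ / Real.Gamma (ρ / 2 + 1) :=
          div_nonneg (by positivity) (Real.Gamma_pos_of_pos (by positivity)).le
        rw [show (2 : ℝ≥0∞) = ENNReal.ofReal 2 by norm_num,
          ← ENNReal.ofReal_mul (by norm_num), ← ENNReal.ofReal_mul (by positivity),
          ← ENNReal.ofReal_mul (by positivity)]
        congr 1
        have hsqrtpi : Real.sqrt π ^ ρ = π ^ ((ρ:ℝ)/2) := by
          rw [Real.sqrt_eq_rpow, ← Real.rpow_natCast (π ^ ((1:ℝ)/2)) ρ,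
            ← Real.rpow_mul Real.pi_pos.le]
          norm_num
          ring_nf
        have hRpow : R ^ (ρ + 2) = (t ^ (((ρ:ℝ) + 2)/2))⁻¹ := by
          rw [hR, Real.sqrt_eq_rpow, ← Real.rpow_natCast (t⁻¹ ^ ((1:ℝ)/2)) (ρ + 2),
            ← Real.rpow_mul (by positivity), Real.inv_rpow ht.le]
          push_cast
          ring_nf
        have hΓ : 0 < Real.Gamma ((ρ:ℝ)/2 + 1) := Real.Gamma_pos_of_pos (by positivity)
        have htp : 0 < t ^ (((ρ:ℝ) + 2)/2) := Real.rpow_pos_of_pos ht _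
        have hpi : π * π ^ ((ρ:ℝ)/2) = π ^ (((ρ:ℝ) + 2)/2) := by
          rw [show (((ρ:ℝ) + 2)/2) = (ρ:ℝ)/2 + 1 by ring,
            Real.rpow_add Real.pi_pos, Real.rpow_one]
          ring
        rw [hsqrtpi, hRpow, ← hpi]
        field_simp

set_option maxHeartbeats 1000000 in
/-- For a symmetric bilinear form of signature `(2,ρ)` on `ℝ^(ρ+2)` and
`φ` with `Re φ, Im φ` spanning a positive definite 2-plane,
`⟨Re φ,Re φ⟩ = ⟨Im φ,Im φ⟩ = t > 0`, `⟨Re φ,Im φ⟩ = 0`, the set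
`Υ = {v : ⟨v,v⟩ ≥ 0, ⟨Re φ,v⟩² + ⟨Im φ,v⟩² ≤ 1}` has volume
`2π^((ρ+2)/2)/((ρ+2)·Γ(ρ/2+1)·t^((ρ+2)/2)·√|Disc|)`, where `Disc` is the determinant of the
Gram matrix in the standard basis. -/
theorem volume_upsilon_region
    (ρ : ℕ) (B : (Fin (ρ + 2) → ℝ) →ₗ[ℝ] (Fin (ρ + 2) → ℝ) →ₗ[ℝ] ℝ)
    (hsymm : ∀ x y, B x y = B y x)
    (reφ imφ : Fin (ρ + 2) → ℝ) (t : ℝ) (ht : 0 < t)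
    (hrr : B reφ reφ = t) (hii : B imφ imφ = t) (hri : B reφ imφ = 0)
    (hneg : ∀ v, B v reφ = 0 → B v imφ = 0 → v ≠ 0 → B v v < 0)
    (Disc : ℝ)
    (hDisc : (Matrix.of fun i j =>
        B (Pi.basisFun ℝ (Fin (ρ + 2)) i) (Pi.basisFun ℝ (Fin (ρ + 2)) j)).det = Disc) :
    volume {v : Fin (ρ + 2) → ℝ |
        0 ≤ B v v ∧ (B reφ v) ^ 2 + (B imφ v) ^ 2 ≤ 1}
      = ENNReal.ofReal
          (2 * π ^ (((ρ : ℝ) + 2) / 2) /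
            (((ρ : ℝ) + 2) * Real.Gamma ((ρ : ℝ) / 2 + 1) * t ^ (((ρ : ℝ) + 2) / 2) *
              Real.sqrt |Disc|)) := by

  classical
  have hir : B imφ reφ = 0 := (hsymm imφ reφ).trans hri
  have hst : Real.sqrt t * Real.sqrt t = t := Real.mul_self_sqrt ht.le
  have hstpos : 0 < Real.sqrt t := Real.sqrt_pos.2 ht
  have hBsymm : B.IsSymm := ⟨fun x y => hsymm x y⟩
  set κ : (Fin 2 ⊕ Fin ρ) ≃ Fin (ρ + 2) := finSumFinEquiv.trans (finCongr (by omega)) with hκ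
  -- the subspace orthogonal to reφ, imφ
  set W : Submodule ℝ (Fin (ρ + 2) → ℝ) := LinearMap.ker ((B reφ).prod (B imφ)) with hWdef
  have hmemW : ∀ z : Fin (ρ + 2) → ℝ, z ∈ W ↔ B reφ z = 0 ∧ B imφ z = 0 := by
    intro z
    simp [hWdef, LinearMap.mem_ker, LinearMap.prod_apply, Prod.ext_iff]
  have hrankW : Module.finrank ℝ W = ρ := by
    have hsurj : LinearMap.range ((B reφ).prod (B imφ)) = ⊤ := by
      rw [LinearMap.range_eq_top]
      intro y
      refine ⟨(y.1 / t) • reφ + (y.2 / t) • imφ, ?_⟩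
      have : B reφ ((y.1 / t) • reφ + (y.2 / t) • imφ) = y.1 ∧
          B imφ ((y.1 / t) • reφ + (y.2 / t) • imφ) = y.2 := by
        simp only [map_add, _root_.map_smul, smul_eq_mul, hrr, hii, hri, hir]
        constructor <;> field_simp <;> ring
      simp [LinearMap.prod_apply, this.1, this.2]
    have hfr := LinearMap.finrank_range_add_finrank_ker ((B reφ).prod (B imφ))
    rw [hsurj] at hfr
    simp only [finrank_top] at hfr
    have h2 : Module.finrank ℝ (ℝ × ℝ) = 2 := by
      simp [Module.finrank_prod]
    have hn : Module.finrank ℝ (Fin (ρ + 2) → ℝ) = ρ + 2 := Module.finrank_fin_fun ℝ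
    rw [h2, hn] at hfr
    rw [hWdef]
    omega
  -- negative definiteness on W
  have hnegW : ∀ z : Fin (ρ + 2) → ℝ, z ∈ W → z ≠ 0 → B z z < 0 := by
    intro z hz hz0
    obtain ⟨h1, h2⟩ := (hmemW z).1 hz
    exact hneg z ((hsymm z reφ).trans h1) ((hsymm z imφ).trans h2) hz0
  -- an orthogonal basis of W
  obtain ⟨vb0, hvb0⟩ := LinearMap.BilinForm.exists_orthogonal_basis
    (hBsymm.domRestrict W)
  set vb : Module.Basis (Fin ρ) ℝ W := vb0.reindex (finCongr hrankW) with hvbdef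
  have horthW : ∀ j k : Fin ρ, j ≠ k → B (vb j : Fin (ρ + 2) → ℝ) (vb k : Fin (ρ + 2) → ℝ) = 0 := by
    intro j k hjk
    have := hvb0 (show (finCongr hrankW).symm j ≠ (finCongr hrankW).symm k from
      fun h => hjk ((finCongr hrankW).symm.injective h))
    simpa [hvbdef, Module.Basis.reindex_apply, LinearMap.domRestrict₁₂_apply] using this
  -- normalized negative vectors
  set wv : Fin ρ → (Fin (ρ + 2) → ℝ) := fun k =>
    (Real.sqrt (-(B (vb k : Fin (ρ + 2) → ℝ) (vb k : Fin (ρ + 2) → ℝ))))⁻¹ •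
      (vb k : Fin (ρ + 2) → ℝ) with hwvdef
  have hwvmem : ∀ k, wv k ∈ W := fun k => W.smul_mem _ (vb k).2
  have hww : ∀ j k, B (wv j) (wv k) = if j = k then (-1 : ℝ) else 0 := by
    intro j k
    by_cases hjk : j = k
    · subst hjk
      rw [if_pos rfl]
      have hvne : (vb j : Fin (ρ + 2) → ℝ) ≠ 0 := by
        simpa [Submodule.coe_eq_zero] using vb.ne_zero j
      have hc : B (vb j : Fin (ρ + 2) → ℝ) (vb j : Fin (ρ + 2) → ℝ) < 0 :=
        hnegW _ (vb j).2 hvne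
      set c : ℝ := B (vb j : Fin (ρ + 2) → ℝ) (vb j : Fin (ρ + 2) → ℝ) with hcdef
      have hcs : Real.sqrt (-c) * Real.sqrt (-c) = -c := Real.mul_self_sqrt (by linarith)
      have hcspos : 0 < Real.sqrt (-c) := Real.sqrt_pos.2 (by linarith)
      rw [hwvdef]
      simp only [_root_.map_smul, LinearMap.smul_apply, smul_eq_mul, ← hcdef]
      field_simp
      all_goals linarith
    · rw [if_neg hjk, hwvdef]
      simp only [_root_.map_smul, LinearMap.smul_apply, smul_eq_mul]
      rw [horthW j k hjk]
      ring
  -- the full family of vectors and signs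
  set uvec : Fin (ρ + 2) → (Fin (ρ + 2) → ℝ) := fun i =>
    Sum.elim (fun l : Fin 2 => if l = 0 then (Real.sqrt t)⁻¹ • reφ else (Real.sqrt t)⁻¹ • imφ)
      wv (κ.symm i) with huvecdef
  set d : Fin (ρ + 2) → ℝ := fun i =>
    Sum.elim (fun _ : Fin 2 => (1 : ℝ)) (fun _ : Fin ρ => (-1 : ℝ)) (κ.symm i) with hddef
  have hs1 : (Real.sqrt t)⁻¹ * ((Real.sqrt t)⁻¹ * t) = 1 := by
    field_simp
    rw [Real.sq_sqrt ht.le]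
  have hwre : ∀ k, B reφ (wv k) = 0 := fun k => ((hmemW _).1 (hwvmem k)).1
  have hwim : ∀ k, B imφ (wv k) = 0 := fun k => ((hmemW _).1 (hwvmem k)).2
  have hrw : ∀ k, B (wv k) reφ = 0 := fun k => (hsymm _ _).trans (hwre k)
  have hiw : ∀ k, B (wv k) imφ = 0 := fun k => (hsymm _ _).trans (hwim k)
  have hGram : ∀ i j, B (uvec i) (uvec j) = if i = j then d i else 0 := by
    intro i j
    obtain ⟨x, rfl⟩ := κ.surjective i
    obtain ⟨y, rfl⟩ := κ.surjective j
    have hij : (κ x = κ y) = (x = y) := by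
      simp [Equiv.apply_eq_iff_eq]
    rw [huvecdef, hddef]
    simp only [Equiv.symm_apply_apply, hij]
    rcases x with l | k <;> rcases y with l' | k'
    · fin_cases l <;> fin_cases l' <;>
        simp [_root_.map_smul, smul_eq_mul, hrr, hii, hri, hir, hs1, mul_assoc]
    · fin_cases l <;>
        simp [_root_.map_smul, smul_eq_mul, hwre, hwim]
    · fin_cases l' <;>
        simp [_root_.map_smul, smul_eq_mul, hrw, hiw]
    · simp only [Sum.elim_inr, Sum.inr.injEq]
      rw [hww k k']
  -- the matrix of the new vectors
  set M : Matrix (Fin (ρ + 2)) (Fin (ρ + 2)) ℝ := Matrix.of fun i j =>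
    B (Pi.basisFun ℝ (Fin (ρ + 2)) i) (Pi.basisFun ℝ (Fin (ρ + 2)) j) with hMdef
  set P : Matrix (Fin (ρ + 2)) (Fin (ρ + 2)) ℝ := Matrix.of fun i j => uvec j i with hPdef
  have hexp : ∀ x y : Fin (ρ + 2) → ℝ,
      B x y = ∑ l, ∑ k, x l * (y k * M l k) := by
    intro x y
    have hx : x = ∑ l, x l • Pi.basisFun ℝ (Fin (ρ + 2)) l := by
      conv_lhs => rw [← (Pi.basisFun ℝ (Fin (ρ + 2))).sum_repr x]
      simp
    have hy : y = ∑ k, y k • Pi.basisFun ℝ (Fin (ρ + 2)) k := by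
      conv_lhs => rw [← (Pi.basisFun ℝ (Fin (ρ + 2))).sum_repr y]
      simp
    conv_lhs => rw [hx, hy]
    rw [LinearMap.BilinForm.sum_left]
    refine Finset.sum_congr rfl fun l _ => ?_
    rw [_root_.map_smul, LinearMap.smul_apply, map_sum, smul_eq_mul, Finset.mul_sum]
    refine Finset.sum_congr rfl fun k _ => ?_
    rw [_root_.map_smul, smul_eq_mul, hMdef]
    simp [mul_comm]
  have hPMP : P.transpose * M * P = Matrix.diagonal d := by
    ext i j
    rw [Matrix.mul_apply]
    simp only [Matrix.mul_apply, Matrix.transpose_apply, hPdef, Matrix.of_apply]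
    rw [show ∑ k, (∑ l, uvec i l * M l k) * uvec j k
        = ∑ l, ∑ k, uvec i l * (uvec j k * M l k) by
      rw [Finset.sum_comm]
      exact Finset.sum_congr rfl fun l _ => by
        rw [Finset.sum_mul]
        exact Finset.sum_congr rfl fun k _ => by ring]
    rw [← hexp, hGram, Matrix.diagonal_apply]
  have hprod : ∏ i, d i = (-1 : ℝ) ^ ρ := by
    rw [← Equiv.prod_comp κ d, Fintype.prod_sum_type]
    simp [hddef]
  have hdet2 : P.det ^ 2 * Disc = (-1 : ℝ) ^ ρ := by
    have hdd := congrArg Matrix.det hPMP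
    rw [Matrix.det_mul, Matrix.det_mul, Matrix.det_transpose, Matrix.det_diagonal,
      hDisc, hprod] at hdd
    rw [← hdd]
    ring
  have hPne : P.det ≠ 0 := by
    intro h
    rw [h] at hdet2
    have : ((-1 : ℝ)) ^ ρ ≠ 0 := pow_ne_zero _ (by norm_num)
    simp at hdet2
    exact this hdet2.symm
  have hsqrtDisc : Real.sqrt |Disc| = |P.det|⁻¹ := by
    have h1 : P.det ^ 2 * |Disc| = 1 := by
      have h2 := congrArg abs hdet2
      rw [abs_mul, abs_pow, sq_abs, abs_pow, abs_neg, abs_one, one_pow] at h2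
      exact h2
    have h3 : |Disc| = (|P.det| ^ 2)⁻¹ := by
      rw [sq_abs]
      field_simp at h1 ⊢
      linarith
    rw [h3, Real.sqrt_inv, Real.sqrt_sq (abs_nonneg _)]
  -- the linear change of variables
  set L : (Fin (ρ + 2) → ℝ) →ₗ[ℝ] (Fin (ρ + 2) → ℝ) := Matrix.toLin' P with hLdef
  have hdetL : LinearMap.det L = P.det := by rw [hLdef]; exact LinearMap.det_toLin' P
  have hLapp : ∀ c, L c = ∑ j, c j • uvec j := by
    intro c
    ext i
    rw [hLdef, Matrix.toLin'_apply]
    simp only [Matrix.mulVec, dotProduct, hPdef, Matrix.of_apply,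
      Finset.sum_apply, Pi.smul_apply, smul_eq_mul]
    exact Finset.sum_congr rfl fun j _ => mul_comm _ _
  have hs2 : (Real.sqrt t)⁻¹ * t = Real.sqrt t := by
    rw [inv_mul_eq_iff_eq_mul₀ hstpos.ne']
    exact hst.symm
  have hBreU : ∀ j, B reφ (uvec j) = if j = κ (Sum.inl 0) then Real.sqrt t else 0 := by
    intro j
    obtain ⟨x, rfl⟩ := κ.surjective j
    rw [huvecdef]
    simp only [Equiv.symm_apply_apply, Equiv.apply_eq_iff_eq]
    rcases x with l | k
    · fin_cases l <;>
        simp [_root_.map_smul, smul_eq_mul, hrr, hri, hs2]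
    · simp [hwre]
  have hBimU : ∀ j, B imφ (uvec j) = if j = κ (Sum.inl 1) then Real.sqrt t else 0 := by
    intro j
    obtain ⟨x, rfl⟩ := κ.surjective j
    rw [huvecdef]
    simp only [Equiv.symm_apply_apply, Equiv.apply_eq_iff_eq]
    rcases x with l | k
    · fin_cases l <;>
        simp [_root_.map_smul, smul_eq_mul, hii, hir, hs2]
    · simp [hwim]
  have hBLL : ∀ c : Fin (ρ + 2) → ℝ, B (L c) (L c) = ∑ j, d j * (c j * c j) := by
    intro c
    rw [hLapp, LinearMap.BilinForm.sum_left]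
    refine Finset.sum_congr rfl fun j _ => ?_
    rw [LinearMap.BilinForm.sum_right]
    rw [show ∑ k, B (c j • uvec j) (c k • uvec k)
        = ∑ k, c j * (c k * if j = k then d j else 0) from
      Finset.sum_congr rfl fun k _ => by
        rw [LinearMap.BilinForm.smul_left, LinearMap.BilinForm.smul_right, hGram]]
    simp only [mul_ite, mul_zero, Finset.sum_ite_eq, Finset.mem_univ, if_true]
    ring
  have hBreL : ∀ c : Fin (ρ + 2) → ℝ, B reφ (L c) = Real.sqrt t * c (κ (Sum.inl 0)) := by
    intro c
    rw [hLapp, LinearMap.BilinForm.sum_right]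
    simp only [LinearMap.BilinForm.smul_right, hBreU, mul_ite, mul_zero,
      Finset.sum_ite_eq', Finset.mem_univ, if_true]
    ring
  have hBimL : ∀ c : Fin (ρ + 2) → ℝ, B imφ (L c) = Real.sqrt t * c (κ (Sum.inl 1)) := by
    intro c
    rw [hLapp, LinearMap.BilinForm.sum_right]
    simp only [LinearMap.BilinForm.smul_right, hBimU, mul_ite, mul_zero,
      Finset.sum_ite_eq', Finset.mem_univ, if_true]
    ring
  -- description of the preimage
  set Sset : Set (Fin (ρ + 2) → ℝ) := {c | 0 ≤ ∑ j, d j * (c j * c j) ∧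
      t * (c (κ (Sum.inl 0)) ^ 2 + c (κ (Sum.inl 1)) ^ 2) ≤ 1} with hSdef
  have hpre : L ⁻¹' {v : Fin (ρ + 2) → ℝ |
      0 ≤ B v v ∧ (B reφ v) ^ 2 + (B imφ v) ^ 2 ≤ 1} = Sset := by
    ext c
    have hsq : (B reφ (L c)) ^ 2 + (B imφ (L c)) ^ 2
        = t * (c (κ (Sum.inl 0)) ^ 2 + c (κ (Sum.inl 1)) ^ 2) := by
      rw [hBreL, hBimL, mul_pow, mul_pow, Real.sq_sqrt ht.le]
      ring
    simp only [Set.mem_preimage, Set.mem_setOf_eq, hSdef, hBLL, hsq]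
  -- measurability of Sset
  have hSmeas : MeasurableSet Sset := by
    rw [hSdef]
    have m1 : Measurable fun c : Fin (ρ + 2) → ℝ => ∑ j, d j * (c j * c j) := by
      apply Finset.measurable_sum
      intro j _
      fun_prop
    have m2 : Measurable fun c : Fin (ρ + 2) → ℝ =>
        t * (c (κ (Sum.inl 0)) ^ 2 + c (κ (Sum.inl 1)) ^ 2) := by fun_prop
    exact (measurableSet_le measurable_const m1).inter (measurableSet_le m2 measurable_const)
  -- volume of the preimage
  have hvolU : volume {v : Fin (ρ + 2) → ℝ |
      0 ≤ B v v ∧ (B reφ v) ^ 2 + (B imφ v) ^ 2 ≤ 1}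
      = ENNReal.ofReal |P.det| * volume Sset := by
    rw [← hpre, Measure.addHaar_preimage_linearMap volume
      (show LinearMap.det L ≠ 0 by rw [hdetL]; exact hPne), hdetL, ← mul_assoc,
      ← ENNReal.ofReal_mul (abs_nonneg _), abs_inv, mul_inv_cancel₀ (abs_ne_zero.2 hPne)]
    simp
  -- transfer Sset to the product space
  set Φ : ((Fin 2 → ℝ) × (Fin ρ → ℝ)) ≃ᵐ (Fin (ρ + 2) → ℝ) :=
    (MeasurableEquiv.sumPiEquivProdPi (fun _ : Fin 2 ⊕ Fin ρ => ℝ)).symm.trans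
      (MeasurableEquiv.piCongrLeft (fun _ => ℝ) κ) with hΦdef
  have hΦmp : MeasurePreserving Φ volume volume := by
    have h1 : MeasurePreserving (MeasurableEquiv.piCongrLeft (fun _ : Fin (ρ + 2) => ℝ) κ)
        volume volume := volume_measurePreserving_piCongrLeft _ κ
    have h2 : MeasurePreserving
        (MeasurableEquiv.sumPiEquivProdPi (fun _ : Fin 2 ⊕ Fin ρ => ℝ)).symm
        volume volume := volume_measurePreserving_sumPiEquivProdPi_symm _
    exact h1.comp h2
  have hΦval1 : ∀ (p : Fin 2 → ℝ) (w : Fin ρ → ℝ) (l : Fin 2),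
      Φ (p, w) (κ (Sum.inl l)) = p l := fun p w l =>
    Equiv.piCongrLeft_sumInl (fun _ => ℝ) κ p w l
  have hΦval2 : ∀ (p : Fin 2 → ℝ) (w : Fin ρ → ℝ) (k : Fin ρ),
      Φ (p, w) (κ (Sum.inr k)) = w k := fun p w k =>
    Equiv.piCongrLeft_sumInr (fun _ => ℝ) κ p w k
  have hΦpre : Φ ⁻¹' Sset = {q : (Fin 2 → ℝ) × (Fin ρ → ℝ) |
      (∑ k, q.2 k ^ 2 ≤ q.1 0 ^ 2 + q.1 1 ^ 2) ∧ t * (q.1 0 ^ 2 + q.1 1 ^ 2) ≤ 1} := by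
    ext ⟨p, w⟩
    simp only [Set.mem_preimage, hSdef, Set.mem_setOf_eq]
    have hsum : ∑ j, d j * (Φ (p, w) j * Φ (p, w) j)
        = (p 0 ^ 2 + p 1 ^ 2) - ∑ k, w k ^ 2 := by
      rw [← Equiv.sum_comp κ (fun j => d j * (Φ (p, w) j * Φ (p, w) j)),
        Fintype.sum_sum_type]
      have h1 : ∀ l : Fin 2, d (κ (Sum.inl l)) = 1 := by
        intro l
        rw [hddef]
        simp
      have h2 : ∀ k : Fin ρ, d (κ (Sum.inr k)) = -1 := by
        intro k
        rw [hddef]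
        simp
      simp only [hΦval1, hΦval2, h1, h2, Fin.sum_univ_two]
      rw [show ∑ x : Fin ρ, (-1 : ℝ) * (w x * w x) = -∑ k, w k ^ 2 by
        rw [← Finset.sum_neg_distrib]
        exact Finset.sum_congr rfl fun k _ => by ring]
      ring
    rw [hsum, hΦval1, hΦval1]
    constructor
    · rintro ⟨hc1, hc2⟩
      exact ⟨by linarith, hc2⟩
    · rintro ⟨hc1, hc2⟩
      exact ⟨by linarith, hc2⟩
  have hvolS : volume Sset = volume {q : (Fin 2 → ℝ) × (Fin ρ → ℝ) |
      (∑ k, q.2 k ^ 2 ≤ q.1 0 ^ 2 + q.1 1 ^ 2) ∧ t * (q.1 0 ^ 2 + q.1 1 ^ 2) ≤ 1} := by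
    rw [← hΦmp.measure_preimage hSmeas.nullMeasurableSet, hΦpre]
  rw [hvolU, hvolS, my_volume_T ρ t ht, ← ENNReal.ofReal_mul (abs_nonneg _)]
  congr 1
  rw [hsqrtDisc]
  have hΓ : 0 < Real.Gamma ((ρ : ℝ) / 2 + 1) := Real.Gamma_pos_of_pos (by positivity)
  have htp : 0 < t ^ (((ρ : ℝ) + 2) / 2) := Real.rpow_pos_of_pos ht _
  have hP : |P.det| ≠ 0 := abs_ne_zero.2 hPne
  field_simp
end
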